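/- Let r ∈ ℕ, n = 2r+1, and let X_4 be the n×n skew-symmetric matrix in block form [[O, A],[−Aᵀ, B]] where A is the (r+1)×r generic matrix with entries x_{k, n−i+1} and B is a generic r×r skew-symmetric matrix. Let S = K[X_4, y_1, …, y_{r+1}] and define g_i = ∑_{k=1}^{r+1} (−1)^{k+1} x_{k, n−(i−1)} y_k for i = 1, …, r. Then g_1, …, g_r form a regular sequence in S; in particular the ideal J = ⟨g_1, …, g_r⟩ is a complete intersection generated by quadrics. -/

import Mathlib

open MvPolynomial

/-- The variables of the sparse skew-symmetric matrix
`X₄ = [[O, A], [−Aᵀ, B]]` of order `n = 2r+1`: the generic entries of the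
`(r+1) × r` block `A` (`x_{k,j}` with `1 ≤ k ≤ r+1 < j ≤ n`), the generic
entries of the skew-symmetric `r × r` block `B`, and the Rees variables
`y_1, …, y_{r+1}`. -/
abbrev X4Var (r : ℕ) : Type :=
  (Fin (r + 1) × Fin r) ⊕ ({p : Fin r × Fin r // p.1 < p.2} ⊕ Fin (r + 1))

/-- The defining relations of the Rees algebra of `Pf_{n−1}(X₄)`:
`g_i = ∑_{k=1}^{r+1} (−1)^{k+1} x_{k, n−(i−1)} y_k`, `i = 1, …, r`.  Here the
column of `A` holding `x_{k, n−(i−1)}` is the `(r−i)`-th (zero-based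
`r−1−i'` for `i = i'+1`). -/
noncomputable def g4 (r : ℕ) (K : Type*) [Field K] (i : Fin r) :
    MvPolynomial (X4Var r) K :=
  ∑ k : Fin (r + 1),
    (-1 : MvPolynomial (X4Var r) K) ^ k.val *
      (X (Sum.inl (k, ⟨r - 1 - i.val, by have := i.isLt; omega⟩)) *
        X (Sum.inr (Sum.inr k)))

section Generic


variable {D : Type*} [CommRing D] {κ : Type*}

private lemma mem_of_C_mem {J : Ideal D} {b : D}
    (h : (C b : MvPolynomial κ D) ∈ J.map (C : D →+* MvPolynomial κ D)) : b ∈ J := by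
  simpa using MvPolynomial.mem_map_C_iff.1 h 0

private lemma regC {J : Ideal D} {a : D} (ha : ∀ b, a * b ∈ J → b ∈ J) {q : MvPolynomial κ D}
    (h : C a * q ∈ J.map (C : D →+* MvPolynomial κ D)) :
    q ∈ J.map (C : D →+* MvPolynomial κ D) := by
  rw [MvPolynomial.mem_map_C_iff] at h ⊢
  intro m
  exact ha _ (by simpa [coeff_C_mul] using h m)

private lemma work {s : ℕ} {emb : Fin s → κ} (hemb : Function.Injective emb)
    {c : Fin s → D} {J : Ideal D} (k₀ : Fin s)
    (hreg : ∀ b, c k₀ * b ∈ J → b ∈ J)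
    {p : MvPolynomial κ D}
    (hp : (∑ k, C (c k) * X (emb k)) * p ∈ J.map (C : D →+* MvPolynomial κ D)) :
    p ∈ J.map (C : D →+* MvPolynomial κ D) := by
  classical
  rw [MvPolynomial.mem_map_C_iff] at hp ⊢
  by_contra hcon
  push_neg at hcon
  set T : Finset (κ →₀ ℕ) := p.support.filter (fun m => coeff m p ∉ J) with hT
  have hTne : T.Nonempty := by
    obtain ⟨m₀, hm₀⟩ := hcon
    exact ⟨m₀, Finset.mem_filter.2
      ⟨mem_support_iff.2 (fun h0 => hm₀ (h0 ▸ J.zero_mem)), hm₀⟩⟩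
  obtain ⟨m, hmT, hmax⟩ := Finset.exists_max_image T (fun m => m (emb k₀)) hTne
  have hmJ : coeff m p ∉ J := (Finset.mem_filter.1 hmT).2
  have key := hp (m + Finsupp.single (emb k₀) 1)
  rw [Finset.sum_mul, coeff_sum] at key
  have hterm : ∀ k : Fin s, k ≠ k₀ →
      coeff (m + Finsupp.single (emb k₀) 1) (C (c k) * X (emb k) * p) ∈ J := by
    intro k hk
    rw [mul_assoc, coeff_C_mul, coeff_X_mul']
    split_ifs with hmem
    · refine J.mul_mem_left _ ?_
      set m' := m + Finsupp.single (emb k₀) 1 - Finsupp.single (emb k) 1 with hm'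
      by_contra hm'J
      have hm'T : m' ∈ T := Finset.mem_filter.2
        ⟨mem_support_iff.2 (fun h0 => hm'J (h0 ▸ J.zero_mem)), hm'J⟩
      have hle := hmax m' hm'T
      have hv : m' (emb k₀) = m (emb k₀) + 1 := by
        have hne : emb k ≠ emb k₀ := fun hc => hk (hemb hc)
        simp [hm', Finsupp.sub_apply, Finsupp.add_apply, Finsupp.single_apply, hne]
      omega
    · simpa using J.zero_mem
  have hk₀ : coeff (m + Finsupp.single (emb k₀) 1) (C (c k₀) * X (emb k₀) * p)
      = c k₀ * coeff m p := by
    rw [mul_assoc, coeff_C_mul, coeff_X_mul']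
    rw [if_pos (by simp [Finsupp.mem_support_iff, Finsupp.add_apply, Finsupp.single_apply])]
    congr 1
    rw [add_tsub_cancel_right]
  rw [← Finset.add_sum_erase _ _ (Finset.mem_univ k₀)] at key
  have hrest : (∑ k ∈ Finset.univ.erase k₀,
      coeff (m + Finsupp.single (emb k₀) 1) (C (c k) * X (emb k) * p)) ∈ J :=
    J.sum_mem (fun k hk => hterm k (Finset.ne_of_mem_erase hk))
  have hfin : c k₀ * coeff m p ∈ J := by
    have := J.sub_mem key hrest
    simpa [hk₀] using this
  exact hmJ (hreg _ hfin)

private lemma core' {s : ℕ} {emb : Fin s → κ} (hemb : Function.Injective emb)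
    {c : Fin s → D} {J : Ideal D} (k₀ k₁ : Fin s)
    (hA : ∀ b, c k₀ * b ∈ J → b ∈ J)
    (hB : ∀ b, c k₁ * b ∈ J ⊔ Ideal.span {c k₀} → b ∈ J ⊔ Ideal.span {c k₀})
    {p : MvPolynomial κ D}
    (hp : C (c k₀) * p ∈ J.map (C : D →+* MvPolynomial κ D)
        ⊔ Ideal.span {∑ k, C (c k) * X (emb k)}) :
    p ∈ J.map (C : D →+* MvPolynomial κ D) ⊔ Ideal.span {∑ k, C (c k) * X (emb k)} := by
  set f : MvPolynomial κ D := ∑ k, C (c k) * X (emb k) with hf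
  obtain ⟨q, hq, z, hz, heq⟩ := Submodule.mem_sup.1 hp
  obtain ⟨h, rfl⟩ := Ideal.mem_span_singleton'.1 hz
  have hJ' : (J ⊔ Ideal.span {c k₀}).map (C : D →+* MvPolynomial κ D)
      = J.map (C : D →+* MvPolynomial κ D) ⊔ Ideal.span {(C (c k₀) : MvPolynomial κ D)} := by
    rw [Ideal.map_sup, Ideal.map_span, Set.image_singleton]
  have hfh : f * h ∈ (J ⊔ Ideal.span {c k₀}).map (C : D →+* MvPolynomial κ D) := by
    have hfh' : f * h = C (c k₀) * p - q := by linear_combination heq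
    rw [hfh', hJ']
    exact Submodule.sub_mem _
      (Submodule.mem_sup_right
        (Ideal.mul_mem_right _ _ (Ideal.mem_span_singleton_self _)))
      (Submodule.mem_sup_left hq)
  have hh : h ∈ J.map (C : D →+* MvPolynomial κ D)
      ⊔ Ideal.span {(C (c k₀) : MvPolynomial κ D)} := by
    rw [← hJ']
    exact work hemb k₁ hB (by rw [← hf]; exact hfh)
  obtain ⟨q₂, hq₂, z₂, hz₂, heq₂⟩ := Submodule.mem_sup.1 hh
  obtain ⟨w, rfl⟩ := Ideal.mem_span_singleton'.1 hz₂
  have key : C (c k₀) * (p - w * f) ∈ J.map (C : D →+* MvPolynomial κ D) := by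
    have hkey : C (c k₀) * (p - w * f) = q + q₂ * f := by
      linear_combination (-1 : MvPolynomial κ D) * heq - f * heq₂
    rw [hkey]
    exact Submodule.add_mem _ hq (Ideal.mul_mem_right _ _ hq₂)
  have hpw := regC hA key
  have hsplit : p = (p - w * f) + w * f := by ring
  rw [hsplit]
  exact Submodule.add_mem _ (Submodule.mem_sup_left hpw)
    (Submodule.mem_sup_right (Ideal.mul_mem_left _ _ (Ideal.mem_span_singleton_self _)))

private lemma vars_step {v : κ} {S : Set κ} (hv : v ∉ S) {p : MvPolynomial κ D}
    (h : X v * p ∈ Ideal.span (X '' S : Set (MvPolynomial κ D))) :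
    p ∈ Ideal.span (X '' S : Set (MvPolynomial κ D)) := by
  classical
  rw [mem_ideal_span_X_image] at h ⊢
  intro m hm
  have hm' : Finsupp.single v 1 + m ∈ (X v * p).support := by
    rw [mem_support_iff, coeff_X_mul]
    exact mem_support_iff.1 hm
  obtain ⟨i, hiS, hi⟩ := h _ hm'
  refine ⟨i, hiS, ?_⟩
  have hne : i ≠ v := fun hc => hv (hc ▸ hiS)
  simpa [Finsupp.add_apply, Finsupp.single_apply, hne.symm] using hi

private lemma neg_one_pow_mul_mem_iff {A : Type*} [CommRing A] (n : ℕ) {x : A} {I : Ideal A} :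
    (-1 : A) ^ n * x ∈ I ↔ x ∈ I := by
  rcases Nat.even_or_odd n with h | h
  · rw [h.neg_one_pow, one_mul]
  · rw [h.neg_one_pow, neg_one_mul, Submodule.neg_mem_iff]

private lemma span_neg_one_pow {A : Type*} [CommRing A] (n : ℕ) (x : A) :
    Ideal.span {(-1 : A) ^ n * x} = Ideal.span {x} := by
  rcases Nat.even_or_odd n with h | h
  · rw [h.neg_one_pow, one_mul]
  · rw [h.neg_one_pow, neg_one_mul, Ideal.span_singleton_neg]

end Generic

section Global

variable (r : ℕ) (K : Type*) [Field K]

private abbrev W4 (r : ℕ) : Type := {p : Fin r × Fin r // p.1 < p.2} ⊕ Fin (r + 1)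

private def yv (k : Fin (r + 1)) : X4Var r := Sum.inr (Sum.inr k)

private def cI (i : Fin r) : Fin r := ⟨r - 1 - i.val, by have := i.isLt; omega⟩

private lemma cI_inj {a b : Fin r} (h : cI r a = cI r b) : a = b := by
  have ha := a.isLt; have hb := b.isLt
  have hv := congrArg Fin.val h
  simp only [cI] at hv
  exact Fin.ext (by omega)

private lemma g4_eq (i : Fin r) :
    g4 r K i = ∑ k : Fin (r + 1), (-1 : MvPolynomial (X4Var r) K) ^ k.val *
      (X (Sum.inl (k, cI r i)) * X (yv r k)) := rfl

private def Igen (j t : ℕ) : Set (MvPolynomial (X4Var r) K) :=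
  {q | ∃ i : Fin r, (i : ℕ) < j ∧ g4 r K i = q} ∪
  {q | ∃ k : Fin (r + 1), (k : ℕ) < t ∧ X (yv r k) = q}

private def Ginv (j : ℕ) : Prop :=
  ∀ t : Fin (r + 1), (t : ℕ) + j ≤ r → ∀ p : MvPolynomial (X4Var r) K,
    X (yv r t) * p ∈ Ideal.span (Igen r K j t) → p ∈ Ideal.span (Igen r K j t)

private abbrev τ4 (co : Fin r) : Type := (Fin (r + 1) × {i : Fin r // i ≠ co}) ⊕ W4 r

private abbrev Dc (co : Fin r) := MvPolynomial (τ4 r co) K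

private def varEquiv (co : Fin r) : X4Var r ≃ (Fin (r + 1) ⊕ τ4 r co) where
  toFun v :=
    match v with
    | Sum.inl (k, i) => if h : i = co then Sum.inl k else Sum.inr (Sum.inl (k, ⟨i, h⟩))
    | Sum.inr w => Sum.inr (Sum.inr w)
  invFun v :=
    match v with
    | Sum.inl k => Sum.inl (k, co)
    | Sum.inr (Sum.inl (k, i)) => Sum.inl (k, i.1)
    | Sum.inr (Sum.inr w) => Sum.inr w
  left_inv v := by
    rcases v with ⟨k, i⟩ | w
    · by_cases h : i = co <;> simp [h]
    · rfl
  right_inv v := by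
    rcases v with k | (⟨k, i⟩ | w)
    · simp
    · simp [i.2]
    · rfl

private noncomputable def eq4 (co : Fin r) :
    MvPolynomial (X4Var r) K ≃ₐ[K] MvPolynomial (Fin (r + 1)) (Dc r K co) :=
  (renameEquiv K (varEquiv r co)).trans (sumAlgEquiv K (Fin (r + 1)) (τ4 r co))

private lemma eq4_X_col (co : Fin r) (k : Fin (r + 1)) :
    eq4 r K co (X (Sum.inl (k, co))) = X k := by
  simp [eq4, varEquiv, sumAlgEquiv_X_inl]

private lemma eq4_X_other (co : Fin r) (k : Fin (r + 1)) (i : Fin r) (h : i ≠ co) :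
    eq4 r K co (X (Sum.inl (k, i))) = C (X (Sum.inl (k, ⟨i, h⟩))) := by
  simp [eq4, varEquiv, sumAlgEquiv_X_inr, h]

private lemma eq4_X_w (co : Fin r) (w : W4 r) :
    eq4 r K co (X (Sum.inr w)) = C (X (Sum.inr w)) := by
  simp [eq4, varEquiv, sumAlgEquiv_X_inr]

end Global

section Global2

variable (r : ℕ) (K : Type*) [Field K]

private noncomputable def yD (co : Fin r) (k : Fin (r + 1)) : Dc r K co :=
  X (Sum.inr (Sum.inr k))

private noncomputable def cD (co : Fin r) (k : Fin (r + 1)) : Dc r K co :=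
  (-1) ^ (k : ℕ) * yD r K co k

private noncomputable def fD (co : Fin r) : MvPolynomial (Fin (r + 1)) (Dc r K co) :=
  ∑ k, C (cD r K co k) * X k

private noncomputable def gD (co : Fin r) (i : Fin r) : Dc r K co :=
  if h : cI r i = co then 0
  else ∑ k : Fin (r + 1), (-1 : Dc r K co) ^ (k : ℕ) *
    (X (Sum.inl (k, ⟨cI r i, h⟩)) * yD r K co k)

private lemma eq4_y (co : Fin r) (k : Fin (r + 1)) :
    eq4 r K co (X (yv r k)) = C (yD r K co k) :=
  eq4_X_w r K co (Sum.inr k)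

private lemma eq4_g_col (i : Fin r) :
    eq4 r K (cI r i) (g4 r K i) = fD r K (cI r i) := by
  rw [g4_eq, map_sum, fD]
  refine Finset.sum_congr rfl fun k _ => ?_
  rw [map_mul, map_mul, map_pow, map_neg, map_one, eq4_X_col, eq4_y]
  rw [cD, map_mul, map_pow, map_neg, map_one]
  ring

private lemma eq4_g_other (i : Fin r) (co : Fin r) (h : cI r i ≠ co) :
    eq4 r K co (g4 r K i) = C (gD r K co i) := by
  rw [g4_eq, gD, dif_neg h, map_sum, map_sum]
  refine Finset.sum_congr rfl fun k _ => ?_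
  rw [map_mul, map_mul, map_pow, map_neg, map_one,
    eq4_X_other r K co k _ h, eq4_y]
  rw [map_mul, map_mul, map_pow, map_neg, map_one]

private def IgenD (co : Fin r) (j t : ℕ) : Set (Dc r K co) :=
  {q | ∃ i : Fin r, (i : ℕ) < j ∧ gD r K co i = q} ∪
  {q | ∃ k : Fin (r + 1), (k : ℕ) < t ∧ yD r K co k = q}

private noncomputable def JD (co : Fin r) (j t : ℕ) : Ideal (Dc r K co) :=
  Ideal.span (IgenD r K co j t)

private noncomputable def F4 (co : Fin r) :
    MvPolynomial (X4Var r) K →+* MvPolynomial (Fin (r + 1)) (Dc r K co) :=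
  (eq4 r K co).toRingEquiv.toRingHom

private lemma F4_apply (co : Fin r) (x : MvPolynomial (X4Var r) K) :
    F4 r K co x = eq4 r K co x := rfl

private lemma mem_iff_F4 (co : Fin r) (I : Ideal (MvPolynomial (X4Var r) K))
    (x : MvPolynomial (X4Var r) K) :
    F4 r K co x ∈ I.map (F4 r K co) ↔ x ∈ I := by
  constructor
  · intro h
    obtain ⟨y, hy, hxy⟩ := (Ideal.mem_map_iff_of_surjective _
      (eq4 r K co).surjective).1 h
    have : y = x := (eq4 r K co).injective hxy
    rwa [← this]
  · exact fun h => Ideal.mem_map_of_mem _ h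

private lemma map_span_Igen (co : Fin r) (j t : ℕ)
    (hd : ∀ i : Fin r, (i : ℕ) < j → cI r i ≠ co) :
    (Ideal.span (Igen r K j t)).map (F4 r K co)
      = (JD r K co j t).map (C : Dc r K co →+* MvPolynomial (Fin (r + 1)) (Dc r K co)) := by
  rw [Ideal.map_span, JD, Ideal.map_span]
  congr 1
  ext q
  constructor
  · rintro ⟨x, ⟨i, hi, rfl⟩ | ⟨k, hk, rfl⟩, rfl⟩
    · exact ⟨gD r K co i, Or.inl ⟨i, hi, rfl⟩, (eq4_g_other r K i co (hd i hi)).symm⟩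
    · exact ⟨yD r K co k, Or.inr ⟨k, hk, rfl⟩, (eq4_y r K co k).symm⟩
  · rintro ⟨x, ⟨i, hi, rfl⟩ | ⟨k, hk, rfl⟩, rfl⟩
    · exact ⟨g4 r K i, Or.inl ⟨i, hi, rfl⟩, eq4_g_other r K i co (hd i hi)⟩
    · exact ⟨X (yv r k), Or.inr ⟨k, hk, rfl⟩, eq4_y r K co k⟩

end Global2

section Global3

variable (r : ℕ) (K : Type*) [Field K]

private lemma Igen_zero (t : ℕ) :
    Igen r K 0 t = X '' {v | ∃ k : Fin (r + 1), (k : ℕ) < t ∧ yv r k = v} := by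
  ext q
  constructor
  · rintro (⟨i, hi, rfl⟩ | ⟨k, hk, rfl⟩)
    · omega
    · exact ⟨yv r k, ⟨k, hk, rfl⟩, rfl⟩
  · rintro ⟨v, ⟨k, hk, rfl⟩, rfl⟩
    exact Or.inr ⟨k, hk, rfl⟩

private lemma Ginv_zero : Ginv r K 0 := by
  intro t _ p hp
  rw [Igen_zero] at hp ⊢
  refine vars_step ?_ hp
  rintro ⟨k, hk, hkv⟩
  have : k = t := by
    have := congrArg (fun v : X4Var r => v) hkv
    simp only [yv, Sum.inr.injEq] at hkv
    exact hkv
  omega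

private lemma Igen_succ (j : ℕ) (hj : j < r) (t : ℕ) :
    Igen r K (j + 1) t = insert (g4 r K ⟨j, hj⟩) (Igen r K j t) := by
  ext q
  simp only [Igen, Set.mem_union, Set.mem_insert_iff, Set.mem_setOf_eq]
  constructor
  · rintro (⟨i, hi, rfl⟩ | hk)
    · rcases Nat.lt_succ_iff_lt_or_eq.1 hi with h | h
      · exact Or.inr (Or.inl ⟨i, h, rfl⟩)
      · exact Or.inl (by rw [show i = (⟨j, hj⟩ : Fin r) from Fin.ext h])
    · exact Or.inr (Or.inr hk)
  · rintro (rfl | (⟨i, hi, rfl⟩ | hk))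
    · exact Or.inl ⟨⟨j, hj⟩, by simp, rfl⟩
    · exact Or.inl ⟨i, Nat.lt_succ_of_lt hi, rfl⟩
    · exact Or.inr hk

private lemma IgenD_succ_t (co : Fin r) (j t : ℕ) (ht : t < r + 1) :
    IgenD r K co j (t + 1) = insert (yD r K co ⟨t, ht⟩) (IgenD r K co j t) := by
  ext q
  simp only [IgenD, Set.mem_union, Set.mem_insert_iff, Set.mem_setOf_eq]
  constructor
  · rintro (hg | ⟨k, hk, rfl⟩)
    · exact Or.inr (Or.inl hg)
    · rcases Nat.lt_succ_iff_lt_or_eq.1 hk with h | h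
      · exact Or.inr (Or.inr ⟨k, h, rfl⟩)
      · exact Or.inl (by rw [show k = (⟨t, ht⟩ : Fin (r + 1)) from Fin.ext h])
  · rintro (rfl | (hg | ⟨k, hk, rfl⟩))
    · exact Or.inr ⟨⟨t, ht⟩, by simp, rfl⟩
    · exact Or.inl hg
    · exact Or.inr ⟨k, Nat.lt_succ_of_lt hk, rfl⟩

private lemma JD_succ_t (co : Fin r) (j t : ℕ) (ht : t < r + 1) :
    JD r K co j (t + 1) = JD r K co j t ⊔ Ideal.span {yD r K co ⟨t, ht⟩} := by
  rw [JD, IgenD_succ_t r K co j t ht, Ideal.span_insert, JD, sup_comm]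

private lemma hyp_transport (co : Fin r) (j : ℕ) (t : Fin (r + 1))
    (hd : ∀ i : Fin r, (i : ℕ) < j → cI r i ≠ co)
    (hG : ∀ p : MvPolynomial (X4Var r) K,
      X (yv r t) * p ∈ Ideal.span (Igen r K j t) → p ∈ Ideal.span (Igen r K j t)) :
    ∀ b : Dc r K co, yD r K co t * b ∈ JD r K co j t → b ∈ JD r K co j t := by
  intro b hb
  have h2 : X (yv r t) * (eq4 r K co).symm (C b) ∈ Ideal.span (Igen r K j t) := by
    rw [← mem_iff_F4 r K co, map_span_Igen r K co j t hd]
    have : F4 r K co (X (yv r t) * (eq4 r K co).symm (C b)) = C (yD r K co t * b) := by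
      rw [F4_apply, map_mul, eq4_y, AlgEquiv.apply_symm_apply, ← map_mul]
    rw [this]
    exact Ideal.mem_map_of_mem _ hb
  have h3 := hG _ h2
  rw [← mem_iff_F4 r K co, map_span_Igen r K co j t hd] at h3
  rw [F4_apply, AlgEquiv.apply_symm_apply] at h3
  exact mem_of_C_mem h3

end Global3

section Global4

variable (r : ℕ) (K : Type*) [Field K]

private lemma Ginv_succ (j : ℕ) (hj : j < r) (IH : Ginv r K j) : Ginv r K (j + 1) := by
  intro t ht p hp
  set co := cI r ⟨j, hj⟩ with hco
  have hd : ∀ i : Fin r, (i : ℕ) < j → cI r i ≠ co := by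
    intro i hi hcon
    have h2 := congrArg Fin.val (cI_inj r hcon)
    simp only at h2
    omega
  have ht1 : (t : ℕ) + 1 < r + 1 := by omega
  set k₁ : Fin (r + 1) := ⟨(t : ℕ) + 1, ht1⟩ with hk₁def
  have hk₁ : (k₁ : ℕ) = (t : ℕ) + 1 := rfl
  -- hypotheses for core'
  have hA : ∀ b, cD r K co t * b ∈ JD r K co j t → b ∈ JD r K co j t := by
    intro b hb
    refine hyp_transport r K co j t hd (fun q hq => IH t (by omega) q hq) b ?_
    rw [cD, mul_assoc] at hb
    exact (neg_one_pow_mul_mem_iff _).1 hb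
  have hsp : JD r K co j (t : ℕ) ⊔ Ideal.span {cD r K co t} = JD r K co j ((t : ℕ) + 1) := by
    rw [JD_succ_t r K co j (t : ℕ) t.isLt]
    congr 1
    rw [cD, span_neg_one_pow]
  have hB : ∀ b, cD r K co k₁ * b ∈ JD r K co j t ⊔ Ideal.span {cD r K co t} →
      b ∈ JD r K co j t ⊔ Ideal.span {cD r K co t} := by
    intro b hb
    rw [hsp] at hb ⊢
    refine hyp_transport r K co j k₁ hd (fun q hq => IH k₁ (by omega) q hq) b ?_
    rw [cD, mul_assoc] at hb
    exact (neg_one_pow_mul_mem_iff _).1 hb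
  -- transport the main hypothesis
  have hmap : (Ideal.span (Igen r K (j + 1) (t : ℕ))).map (F4 r K co)
      = (JD r K co j t).map (C : Dc r K co →+* MvPolynomial (Fin (r + 1)) (Dc r K co))
        ⊔ Ideal.span {fD r K co} := by
    rw [Igen_succ r K j hj (t : ℕ), Ideal.span_insert, Ideal.map_sup,
      Ideal.map_span, Set.image_singleton, map_span_Igen r K co j (t : ℕ) hd]
    rw [F4_apply, hco, eq4_g_col]
    exact sup_comm _ _
  have hF : C (yD r K co t) * (eq4 r K co p)
      ∈ (JD r K co j t).map (C : Dc r K co →+* MvPolynomial (Fin (r + 1)) (Dc r K co))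
        ⊔ Ideal.span {fD r K co} := by
    have h0 : F4 r K co (X (yv r t) * p) ∈
        (Ideal.span (Igen r K (j + 1) (t : ℕ))).map (F4 r K co) :=
      Ideal.mem_map_of_mem _ hp
    rw [hmap, F4_apply, map_mul, eq4_y] at h0
    exact h0
  have hsign : C (cD r K co t) * (eq4 r K co p)
      ∈ (JD r K co j t).map (C : Dc r K co →+* MvPolynomial (Fin (r + 1)) (Dc r K co))
        ⊔ Ideal.span {fD r K co} := by
    have hCc : (C (cD r K co t) : MvPolynomial (Fin (r + 1)) (Dc r K co))
        = (-1) ^ (t : ℕ) * C (yD r K co t) := by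
      rw [cD, map_mul, map_pow, map_neg, map_one]
    rw [hCc, mul_assoc]
    exact (neg_one_pow_mul_mem_iff _).2 hF
  have hcore := core' (emb := id) Function.injective_id t k₁ hA hB hsign
  have hcore' : eq4 r K co p ∈ (Ideal.span (Igen r K (j + 1) (t : ℕ))).map (F4 r K co) := by
    rw [hmap]
    exact hcore
  rw [← F4_apply] at hcore'
  exact (mem_iff_F4 r K co _ _).1 hcore'

private lemma Ginv_all (j : ℕ) : Ginv r K j := by
  induction j with
  | zero => exact Ginv_zero r K
  | succ j IH =>
    by_cases hj : j < r
    · exact Ginv_succ r K j hj IH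
    · intro t ht
      exact absurd ht (by omega)

private lemma reg_step (i : Fin r) :
    ∀ p, g4 r K i * p ∈ Ideal.span (Igen r K (i : ℕ) 0) →
      p ∈ Ideal.span (Igen r K (i : ℕ) 0) := by
  intro p hp
  set co := cI r i with hco
  have hd : ∀ i' : Fin r, (i' : ℕ) < (i : ℕ) → cI r i' ≠ co := by
    intro i' hi' hcon
    have h2 := congrArg Fin.val (cI_inj r hcon)
    omega
  have hA : ∀ b, cD r K co 0 * b ∈ JD r K co (i : ℕ) 0 → b ∈ JD r K co (i : ℕ) 0 := by
    intro b hb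
    refine hyp_transport r K co (i : ℕ) 0 hd
      (fun q hq => Ginv_all r K (i : ℕ) 0 (by simpa using i.isLt.le) q hq) b ?_
    rw [cD, mul_assoc] at hb
    exact (neg_one_pow_mul_mem_iff _).1 hb
  have hF : fD r K co * (eq4 r K co p) ∈ (JD r K co (i : ℕ) 0).map
      (C : Dc r K co →+* MvPolynomial (Fin (r + 1)) (Dc r K co)) := by
    have h0 : F4 r K co (g4 r K i * p) ∈
        (Ideal.span (Igen r K (i : ℕ) 0)).map (F4 r K co) :=
      Ideal.mem_map_of_mem _ hp
    rw [map_span_Igen r K co (i : ℕ) 0 hd, F4_apply, map_mul, hco, eq4_g_col] at h0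
    exact h0
  have hwork := work (emb := id) Function.injective_id (0 : Fin (r + 1)) hA
    (p := eq4 r K co p) hF
  have hback : eq4 r K co p ∈ (Ideal.span (Igen r K (i : ℕ) 0)).map (F4 r K co) := by
    rw [map_span_Igen r K co (i : ℕ) 0 hd]
    exact hwork
  rw [← F4_apply] at hback
  exact (mem_iff_F4 r K co _ _).1 hback

end Global4

section Package

private lemma smul_top_mem_iff {R : Type*} [CommRing R] (I : Ideal R) (x : R) :
    x ∈ (I • (⊤ : Submodule R R)) ↔ x ∈ I := by
  constructor
  · intro hx
    refine Submodule.smul_induction_on hx (fun r hr n _ => ?_)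
      (fun a b ha hb => I.add_mem ha hb)
    simpa [smul_eq_mul] using I.mul_mem_right n hr
  · intro hx
    simpa using Submodule.smul_mem_smul hx (Submodule.mem_top (x := (1 : R)))

private lemma isSMulRegular_quot {R : Type*} [CommRing R] {I : Ideal R} {a : R}
    (h : ∀ p, a * p ∈ I → p ∈ I) :
    IsSMulRegular (R ⧸ (I • ⊤ : Submodule R R)) a := by
  intro x y hxy
  obtain ⟨x, rfl⟩ := Submodule.Quotient.mk_surjective _ x
  obtain ⟨y, rfl⟩ := Submodule.Quotient.mk_surjective _ y
  simp only [← Submodule.Quotient.mk_smul] at hxy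
  rw [Submodule.Quotient.eq] at hxy ⊢
  have h2 : a * (x - y) ∈ I := by
    rw [mul_sub]
    exact (smul_top_mem_iff _ _).1 (by simpa [smul_eq_mul, smul_sub] using hxy)
  exact (smul_top_mem_iff _ _).2 (h _ h2)

variable (r : ℕ) (K : Type*) [Field K]

private lemma ofList_take (i : ℕ) :
    Ideal.ofList ((List.ofFn (g4 r K)).take i) = Ideal.span (Igen r K i 0) := by
  apply le_antisymm
  · refine Ideal.span_le.2 ?_
    intro x hx
    simp only [Set.mem_setOf_eq] at hx
    rw [List.mem_take_iff_getElem] at hx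
    obtain ⟨n, hn, rfl⟩ := hx
    have hn' : n < r := by
      have := hn
      simp only [List.length_ofFn] at this
      omega
    refine Ideal.subset_span (Or.inl ⟨⟨n, hn'⟩, ?_, ?_⟩)
    · show n < i
      simp only [List.length_ofFn] at hn
      omega
    · simp [List.getElem_ofFn]
  · refine Ideal.span_le.2 ?_
    rintro x (⟨i', hi', rfl⟩ | ⟨k, hk, rfl⟩)
    · refine Ideal.subset_span ?_
      show g4 r K i' ∈ (List.ofFn (g4 r K)).take i
      rw [List.mem_take_iff_getElem]
      refine ⟨(i' : ℕ), ?_, ?_⟩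
      · simp only [List.length_ofFn]
        have := i'.isLt
        omega
      · simp [List.getElem_ofFn]
    · omega

end Package



/-- the relations `g_1, …, g_r` form a regular sequence in
`S = K[X₄, y_1, …, y_{r+1}]`; in particular the ideal `J = ⟨g_1, …, g_r⟩`
is a complete intersection generated by quadrics. -/
theorem g4_isRegular (r : ℕ) (K : Type*) [Field K] [CharZero K] :
    RingTheory.Sequence.IsRegular (MvPolynomial (X4Var r) K)
      (List.ofFn (g4 r K)) ∧
    ∀ i : Fin r, (g4 r K i).IsHomogeneous 2 := by
  constructor
  · refine ⟨?_, ?_⟩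
    · rw [RingTheory.Sequence.isWeaklyRegular_iff_Fin]
      intro i
      have hi : (i : ℕ) < r := by
        have := i.isLt
        simpa [List.length_ofFn] using this
      have hget : (List.ofFn (g4 r K))[(i : ℕ)] = g4 r K ⟨(i : ℕ), hi⟩ := by
        simp [List.getElem_ofFn]
      rw [Fin.getElem_fin, hget, ofList_take r K (i : ℕ)]
      exact isSMulRegular_quot (reg_step r K ⟨(i : ℕ), hi⟩)
    · intro hcon
      have h1 : (1 : MvPolynomial (X4Var r) K) ∈ Ideal.ofList (List.ofFn (g4 r K)) := by
        have htop : (1 : MvPolynomial (X4Var r) K) ∈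
            (⊤ : Submodule (MvPolynomial (X4Var r) K) (MvPolynomial (X4Var r) K)) := trivial
        rw [hcon] at htop
        exact (smul_top_mem_iff _ _).1 htop
      have hker : Ideal.ofList (List.ofFn (g4 r K)) ≤
          RingHom.ker (constantCoeff : MvPolynomial (X4Var r) K →+* K) := by
        refine Ideal.span_le.2 ?_
        intro x hx
        simp only [Set.mem_setOf_eq, List.mem_ofFn] at hx
        obtain ⟨i, rfl⟩ := hx
        simp [RingHom.mem_ker, g4]
      have := hker h1
      simp [RingHom.mem_ker] at this
  · intro i
    rw [show (2 : ℕ) = 0 + (1 + 1) from rfl]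
    refine MvPolynomial.IsHomogeneous.sum _ _ _ (fun k _ => ?_)
    have hC : ((-1 : MvPolynomial (X4Var r) K) ^ (k : ℕ))
        = C ((-1 : K) ^ (k : ℕ)) := by
      rw [map_pow, map_neg, map_one]
    rw [hC]
    exact (isHomogeneous_C _ _).mul ((isHomogeneous_X _ _).mul (isHomogeneous_X _ _))
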